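/- Let G be a finite MOMG and let π* be a Pareto-Nash Equilibrium of G, where all policies are stationary stochastic policies. Then there exists a preference profile Λ = (λ^1,…,λ^N) with every λ^k ∈ Δ_M^o (all entries strictly positive and summing to 1) such that π* is a Nash equilibrium of the linearly scalarized game G_Λ. -/

import Mathlib

open Finset

/-- A finite-horizon `N`-player multi-objective Markov game with `M` objectives,
horizon `H`, finite state space `S` and finite action sets `A j`. -/
structure MOMG (N M H : ℕ) (S : Type) (A : Fin N → Type) [Fintype S]
    [∀ j, Fintype (A j)] where
  /-- transition kernels `P_h : S × A → Δ(S)` -/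
  P : Fin H → S → ((j : Fin N) → A j) → S → ℝ
  P_nonneg : ∀ h s a s', 0 ≤ P h s a s'
  P_sum_one : ∀ h s a, ∑ s', P h s a s' = 1
  /-- vector rewards `r_{j,h} : S × A → [0,1]^M` -/
  r : Fin N → Fin H → S → ((j : Fin N) → A j) → Fin M → ℝ
  r_nonneg : ∀ j h s a i, 0 ≤ r j h s a i
  r_le_one : ∀ j h s a i, r j h s a i ≤ 1

variable {N M H : ℕ} {S : Type} {A : Fin N → Type} [Fintype S] [∀ j, Fintype (A j)]

/-- A Markov stochastic policy: a decision rule `S → Δ(α)` for each step. -/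
def IsPolicy {H : ℕ} {S α : Type} [Fintype α] (ρ : Fin H → S → α → ℝ) : Prop :=
  ∀ h s, (∀ a, 0 ≤ ρ h s a) ∧ ∑ a, ρ h s a = 1

/-- A product policy: each agent plays a Markov stochastic policy. -/
def IsProductPolicy (π : (j : Fin N) → Fin H → S → A j → ℝ) : Prop :=
  ∀ j, IsPolicy (π j)

/-- Value vector of agent `k` under the product policy `π`, computed by backward
recursion on the number `t` of remaining steps; step index is `H - t`. -/
noncomputable def Vvec (G : MOMG N M H S A) (k : Fin N)
    (π : (j : Fin N) → Fin H → S → A j → ℝ) : ℕ → S → Fin M → ℝ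
  | 0, _, _ => 0
  | (t+1), s, i =>
    if ht : H - (t+1) < H then
      ∑ a : (j : Fin N) → A j, (∏ j, π j ⟨H - (t+1), ht⟩ s (a j)) *
        (G.r k ⟨H - (t+1), ht⟩ s a i +
          ∑ s', G.P ⟨H - (t+1), ht⟩ s a s' * Vvec G k π t s' i)
    else 0

/-- `V_{k,1}^π(s_1) ∈ ℝ^M`. -/
noncomputable def ValueVec (G : MOMG N M H S A) (k : Fin N)
    (π : (j : Fin N) → Fin H → S → A j → ℝ) (s1 : S) : Fin M → ℝ :=
  fun i => Vvec G k π H s1 i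

/-- `u` Pareto dominates `v`. -/
def ParetoDom {M : ℕ} (u v : Fin M → ℝ) : Prop :=
  (∀ i, v i ≤ u i) ∧ ∃ i, v i < u i

/-- `u` strictly Pareto dominates `v`. -/
def StrictParetoDom {M : ℕ} (u v : Fin M → ℝ) : Prop :=
  ∀ i, v i < u i

/-- the closed probability simplex Δ_M -/
def InSimplex {M : ℕ} (l : Fin M → ℝ) : Prop :=
  (∀ i, 0 ≤ l i) ∧ ∑ i, l i = 1

/-- the relative interior Δ_M^o of the simplex -/
def InOpenSimplex {M : ℕ} (l : Fin M → ℝ) : Prop :=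
  (∀ i, 0 < l i) ∧ ∑ i, l i = 1

/-- Pareto-Nash Equilibrium: no agent has a unilateral (Markov stochastic)
deviation whose value vector Pareto dominates its value under `π`. -/
def IsPNE (G : MOMG N M H S A) (s1 : S)
    (π : (j : Fin N) → Fin H → S → A j → ℝ) : Prop :=
  ∀ k, ∀ ρ : Fin H → S → A k → ℝ, IsPolicy ρ →
    ¬ ParetoDom (ValueVec G k (Function.update π k ρ) s1) (ValueVec G k π s1)

/-- Weak Pareto-Nash Equilibrium: no unilateral deviation strictly Pareto
dominates. -/
def IsWPNE (G : MOMG N M H S A) (s1 : S)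
    (π : (j : Fin N) → Fin H → S → A j → ℝ) : Prop :=
  ∀ k, ∀ ρ : Fin H → S → A k → ℝ, IsPolicy ρ →
    ¬ StrictParetoDom (ValueVec G k (Function.update π k ρ) s1) (ValueVec G k π s1)

/-- Nash equilibrium of the linearly scalarized game `G_Λ`. -/
def IsScalarizedNE (G : MOMG N M H S A) (s1 : S) (lam : Fin N → Fin M → ℝ)
    (π : (j : Fin N) → Fin H → S → A j → ℝ) : Prop :=
  ∀ k, ∀ ρ : Fin H → S → A k → ℝ, IsPolicy ρ →
    ∑ i, lam k i * ValueVec G k (Function.update π k ρ) s1 i ≤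
      ∑ i, lam k i * ValueVec G k π s1 i


def dotp {M : ℕ} (x y : Fin M → ℝ) : ℝ := ∑ i, x i * y i

def InCone {M n : ℕ} (v : Fin n → Fin M → ℝ) (b : Fin M → ℝ) : Prop :=
  ∃ μ : Fin n → ℝ, (∀ i, 0 ≤ μ i) ∧ ∀ m, ∑ i, μ i * v i m = b m

lemma farkas {M : ℕ} : ∀ (n : ℕ) (v : Fin n → Fin M → ℝ) (b : Fin M → ℝ),
    ¬ InCone v b → ∃ l : Fin M → ℝ, (∀ i, dotp l (v i) ≤ 0) ∧ 0 < dotp l b := by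
  intro n
  induction n with
  | zero =>
    intro v b hb
    refine ⟨b, fun i => i.elim0, ?_⟩
    have hbne : ∃ m, b m ≠ 0 := by
      by_contra hc
      push_neg at hc
      exact hb ⟨fun i => i.elim0, fun i => i.elim0, fun m => by simp [hc m]⟩
    obtain ⟨m, hm⟩ := hbne
    have key : 0 < b m * b m := by
      rcases lt_trichotomy (b m) 0 with h | h | h
      · nlinarith
      · exact absurd h hm
      · nlinarith
    calc (0:ℝ) < b m * b m := key
      _ ≤ ∑ i, b i * b i := Finset.single_le_sum (fun i _ => mul_self_nonneg (b i)) (mem_univ m)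
  | succ n IH =>
    intro v b hb
    set w : Fin M → ℝ := v 0 with hw
    set u : Fin n → Fin M → ℝ := fun i => v i.succ with hu
    have hbu : ¬ InCone u b := by
      rintro ⟨μ, hμ, hs⟩
      refine hb ⟨Fin.cons 0 μ, ?_, ?_⟩
      · intro i
        refine Fin.cases ?_ ?_ i
        · simp
        · intro j; simpa using hμ j
      · intro m
        rw [Fin.sum_univ_succ]
        simpa using hs m
    obtain ⟨l, hl, hlb⟩ := IH u b hbu
    by_cases hlw : dotp l w ≤ 0
    · refine ⟨l, ?_, hlb⟩
      intro i
      refine Fin.cases ?_ ?_ i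
      · exact hlw
      · intro j; exact hl j
    · push_neg at hlw
      -- project onto hyperplane of l
      set u' : Fin n → Fin M → ℝ := fun i m => dotp l w * u i m - dotp l (u i) * w m with hu'
      set b' : Fin M → ℝ := fun m => dotp l w * b m - dotp l b * w m with hb'
      have hnb' : ¬ InCone u' b' := by
        rintro ⟨μ, hμ, hs⟩
        set B := ∑ i, μ i * dotp l (u i) with hB
        have hBle : B ≤ 0 :=
          Finset.sum_nonpos fun i _ => mul_nonpos_of_nonneg_of_nonpos (hμ i) (hl i)
        set c0 : ℝ := (dotp l b - B) / dotp l w with hc0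
        have hc0nn : 0 ≤ c0 := div_nonneg (by linarith) hlw.le
        refine hb ⟨Fin.cons c0 μ, ?_, ?_⟩
        · intro i
          refine Fin.cases ?_ ?_ i
          · exact hc0nn
          · intro j; exact hμ j
        · intro m
          rw [Fin.sum_univ_succ]
          simp only [Fin.cons_zero, Fin.cons_succ]
          have hsm := hs m
          simp only [hu', hb'] at hsm
          -- hsm : ∑ i, μ i * (dotp l w * u i m - dotp l (u i) * w m) = dotp l w * b m - dotp l b * w m
          have hexp : ∑ i, μ i * (dotp l w * u i m - dotp l (u i) * w m)
              = dotp l w * (∑ i, μ i * u i m) - B * w m := by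
            rw [hB, Finset.mul_sum, Finset.sum_mul, ← Finset.sum_sub_distrib]
            exact Finset.sum_congr rfl fun i _ => by ring
          rw [hexp] at hsm
          have hlwne : dotp l w ≠ 0 := ne_of_gt hlw
          have : c0 * w m + ∑ i, μ i * u i m = b m := by
            have hc0w : c0 * dotp l w = dotp l b - B := by
              rw [hc0, div_mul_cancel₀ _ hlwne]
            have h1 : dotp l w * (c0 * w m + ∑ i, μ i * u i m) = dotp l w * b m := by
              have : dotp l w * (∑ i, μ i * u i m) = dotp l w * b m - (dotp l b - B) * w m := by
                linarith [hsm]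
              calc dotp l w * (c0 * w m + ∑ i, μ i * u i m)
                  = (c0 * dotp l w) * w m + dotp l w * (∑ i, μ i * u i m) := by ring
                _ = (dotp l b - B) * w m + (dotp l w * b m - (dotp l b - B) * w m) := by rw [hc0w, this]
                _ = dotp l w * b m := by ring
            exact mul_left_cancel₀ hlwne h1
          simpa [hu] using this
      obtain ⟨l', hl', hlb'⟩ := IH u' b' hnb'
      refine ⟨fun m => dotp l w * l' m - dotp l' w * l m, ?_, ?_⟩
      · intro i
        have hdot : ∀ x : Fin M → ℝ, dotp (fun m => dotp l w * l' m - dotp l' w * l m) x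
            = dotp l w * dotp l' x - dotp l' w * dotp l x := by
          intro x
          simp only [dotp, Finset.mul_sum, ← Finset.sum_sub_distrib]
          exact Finset.sum_congr rfl fun m _ => by ring
        refine Fin.cases ?_ ?_ i
        · rw [hdot]; show dotp l w * dotp l' w - dotp l' w * dotp l w ≤ 0; ring_nf; simp
        · intro j
          rw [hdot]
          have := hl' j
          have hexpand : dotp l' (u' j) = dotp l w * dotp l' (u j) - dotp l (u j) * dotp l' w := by
            simp only [dotp, hu', Finset.mul_sum, ← Finset.sum_sub_distrib]
            exact Finset.sum_congr rfl fun m _ => by ring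
          rw [hexpand] at this
          show dotp l w * dotp l' (v j.succ) - dotp l' w * dotp l (v j.succ) ≤ 0
          have : dotp l w * dotp l' (u j) - dotp l (u j) * dotp l' w ≤ 0 := this
          simp only [hu] at this
          linarith
      · have hexpand : dotp l' b' = dotp l w * dotp l' b - dotp l b * dotp l' w := by
          simp only [dotp, hb', Finset.mul_sum, ← Finset.sum_sub_distrib]
          exact Finset.sum_congr rfl fun m _ => by ring
        have : dotp (fun m => dotp l w * l' m - dotp l' w * l m) b
            = dotp l w * dotp l' b - dotp l' w * dotp l b := by
          simp only [dotp, Finset.mul_sum, ← Finset.sum_sub_distrib]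
          exact Finset.sum_congr rfl fun m _ => by ring
        rw [this]
        rw [hexpand] at hlb'
        linarith

/-- Tucker-type theorem: if no nonnegative combination of the `v i` is a nonzero
nonnegative vector, then there is a strictly positive `l` with `l · v i ≤ 0` for all `i`. -/
lemma tucker {M : ℕ} {n : ℕ} (v : Fin n → Fin M → ℝ)
    (hyp : ∀ μ : Fin n → ℝ, (∀ i, 0 ≤ μ i) → (∀ m, 0 ≤ ∑ i, μ i * v i m) →
      ∀ m, ∑ i, μ i * v i m = 0) :
    ∃ l : Fin M → ℝ, (∀ m, 0 < l m) ∧ ∀ i, ∑ m, l m * v i m ≤ 0 := by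
  classical
  -- generators : the v i together with the negative unit vectors
  set e : Fin M → Fin M → ℝ := fun m m' => if m' = m then 1 else 0 with he
  set g : Fin (n + M) → Fin M → ℝ := Fin.append v (fun m m' => - e m m') with hg
  have key : ∀ m₀ : Fin M, ∃ l : Fin M → ℝ, (∀ i, dotp l (g i) ≤ 0) ∧ 0 < dotp l (e m₀) := by
    intro m₀
    apply farkas
    rintro ⟨μ, hμ, hs⟩
    set μL : Fin n → ℝ := fun i => μ (Fin.castAdd M i) with hμL
    set μR : Fin M → ℝ := fun m => μ (Fin.natAdd n m) with hμR
    have hsplit : ∀ m, ∑ i, μL i * v i m = e m₀ m + μR m := by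
      intro m
      have := hs m
      rw [Fin.sum_univ_add] at this
      simp only [hg, Fin.append_left, Fin.append_right] at this
      have hR : ∑ m', μ (Fin.natAdd n m') * (-(e m' m)) = - μR m := by
        rw [Finset.sum_eq_single m]
        · simp [he, hμR]
        · intro b _ hb; simp [he, Ne.symm hb]
        · intro h; exact absurd (mem_univ m) h
      rw [hR] at this
      have : ∑ i, μL i * v i m = e m₀ m + μR m := by
        simp only [hμL]; linarith
      exact this
    have hzero := hyp μL (fun i => hμ _) (fun m => by
      rw [hsplit m]
      have : (0:ℝ) ≤ e m₀ m := by simp only [he]; split <;> norm_num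
      have := hμ (Fin.natAdd n m)
      simp only [hμR] at *
      positivity)
    have := hzero m₀
    rw [hsplit m₀] at this
    have h1 : e m₀ m₀ = 1 := by simp [he]
    have := hμ (Fin.natAdd n m₀)
    simp only [hμR] at *
    linarith [hzero m₀, hsplit m₀]
  choose l hl hlpos using key
  refine ⟨fun m => ∑ m₀, l m₀ m, ?_, ?_⟩
  · -- each l m₀ has nonnegative coordinates, and l m has positive m-th coordinate
    have hnn : ∀ m₀ m, 0 ≤ l m₀ m := by
      intro m₀ m
      have := hl m₀ (Fin.natAdd n m)
      simp only [hg, Fin.append_right] at this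
      have hdm : dotp (l m₀) (fun m' => -(e m m')) = - l m₀ m := by
        simp only [dotp]
        rw [Finset.sum_eq_single m]
        · simp [he]
        · intro b _ hb; simp [he, hb]
        · intro h; exact absurd (mem_univ m) h
      rw [hdm] at this; linarith
    have hpos : ∀ m, 0 < l m m := by
      intro m
      have := hlpos m
      have hdm : dotp (l m) (e m) = l m m := by
        simp only [dotp]
        rw [Finset.sum_eq_single m]
        · simp [he]
        · intro b _ hb; simp [he, hb]
        · intro h; exact absurd (mem_univ m) h
      rw [hdm] at this; exact this
    intro m
    have : l m m ≤ ∑ m₀, l m₀ m :=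
      Finset.single_le_sum (fun m₀ _ => hnn m₀ m) (mem_univ m)
    linarith [hpos m]
  · intro i
    have : ∀ m₀, dotp (l m₀) (v i) ≤ 0 := by
      intro m₀
      have := hl m₀ (Fin.castAdd M i)
      simpa only [hg, Fin.append_left] using this
    calc ∑ m, (∑ m₀, l m₀ m) * v i m = ∑ m₀, ∑ m, l m₀ m * v i m := by
          rw [Finset.sum_comm]
          exact Finset.sum_congr rfl fun m _ => by rw [Finset.sum_mul]
      _ ≤ 0 := Finset.sum_nonpos fun m₀ _ => this m₀

-- appended after defs_part
section Game

set_option linter.unusedSectionVars false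

variable {N M H : ℕ} {S : Type} {A : Fin N → Type} [Fintype S] [∀ j, Fintype (A j)]

lemma Vvec_zero (G : MOMG N M H S A) (k : Fin N) (π : ∀ j, Fin H → S → A j → ℝ) (s : S) (i : Fin M) :
    Vvec G k π 0 s i = 0 := rfl

lemma Vvec_succ' (G : MOMG N M H S A) (k : Fin N) (π : ∀ j, Fin H → S → A j → ℝ)
    (t : ℕ) (s : S) (i : Fin M) (ht : H - (t+1) < H) (h : Fin H) (hh : (h : ℕ) = H - (t+1)) :
    Vvec G k π (t+1) s i = ∑ a : (j : Fin N) → A j, (∏ j, π j h s (a j)) *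
      (G.r k h s a i + ∑ s', G.P h s a s' * Vvec G k π t s' i) := by
  rcases h with ⟨hv, hlt⟩
  simp only at hh
  subst hh
  rw [Vvec]
  rw [dif_pos ht]

lemma prod_update (σ : ∀ j, Fin H → S → A j → ℝ) (k : Fin N) (ρ : Fin H → S → A k → ℝ)
    (h : Fin H) (s : S) (a : ∀ j, A j) :
    ∏ j, Function.update σ k ρ j h s (a j)
      = ρ h s (a k) * ∏ j ∈ {k}ᶜ, σ j h s (a j) := by
  classical
  rw [Fintype.prod_eq_mul_prod_compl k]
  congr 1
  · rw [Function.update_self]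
  · exact Finset.prod_congr rfl fun j hj =>
      by rw [Function.update_of_ne (by simpa using hj)]

lemma Vvec_eq_of_agree (G : MOMG N M H S A) (k : Fin N) :
    ∀ t, ∀ (π π' : ∀ j, Fin H → S → A j → ℝ),
      (∀ j (h : Fin H), H - t ≤ (h : ℕ) → π j h = π' j h) →
      ∀ s i, Vvec G k π t s i = Vvec G k π' t s i := by
  intro t
  induction t with
  | zero => intro π π' _ s i; rfl
  | succ t IH =>
    intro π π' hag s i
    by_cases ht : H - (t+1) < H
    · rw [Vvec_succ' G k π t s i ht ⟨_, ht⟩ rfl, Vvec_succ' G k π' t s i ht ⟨_, ht⟩ rfl]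
      refine Finset.sum_congr rfl fun a _ => ?_
      have hπ : ∀ j, π j ⟨H - (t+1), ht⟩ = π' j ⟨H - (t+1), ht⟩ := fun j =>
        hag j _ (le_refl _)
      have hrec : ∀ s', Vvec G k π t s' i = Vvec G k π' t s' i := fun s' =>
        IH π π' (fun j h hh => hag j h (by omega)) s' i
      simp only [hπ, hrec]
    · rw [Vvec, Vvec, dif_neg ht, dif_neg ht]

end Game

section Expansion

set_option linter.unusedSectionVars false

variable {N M H : ℕ} {S : Type} {A : Fin N → Type} [Fintype S] [∀ j, Fintype (A j)]

/-- deterministic policy given by a decision function -/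
def detP {H : ℕ} {S α : Type} [DecidableEq α] (d : Fin H → S → α) : Fin H → S → α → ℝ :=
  fun h s a => if a = d h s then 1 else 0

lemma detP_isPolicy {H : ℕ} {S α : Type} [DecidableEq α] [Fintype α] (d : Fin H → S → α) :
    IsPolicy (detP d) := by
  intro h s
  constructor
  · intro a; unfold detP; split <;> norm_num
  · simp [detP]

/-- probability weight of decision function `d` under policy `ρ` -/
def coef {H : ℕ} {S α : Type} [Fintype S] (ρ : Fin H → S → α → ℝ) (d : Fin H → S → α) : ℝ :=
  ∏ h, ∏ s, ρ h s (d h s)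

lemma coef_nonneg {H : ℕ} {S α : Type} [Fintype S] [Fintype α] {ρ : Fin H → S → α → ℝ}
    (hρ : IsPolicy ρ) (d : Fin H → S → α) : 0 ≤ coef ρ d :=
  Finset.prod_nonneg fun h _ => Finset.prod_nonneg fun s _ => (hρ h s).1 _

lemma prod_sum_swap {ι : Type} [Fintype ι] [DecidableEq ι] {κ : ι → Type} [∀ i, Fintype (κ i)]
    (f : ∀ i, κ i → ℝ) :
    ∏ i, ∑ j, f i j = ∑ g : ∀ i, κ i, ∏ i, f i (g i) := by
  rw [Finset.prod_univ_sum]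
  simp [Fintype.piFinset_univ]

lemma sum_coef {H : ℕ} {S α : Type} [Fintype S] [DecidableEq S] [Fintype α]
    {ρ : Fin H → S → α → ℝ} (hρ : IsPolicy ρ) :
    ∑ d : Fin H → S → α, coef ρ d = 1 := by
  classical
  have h2 : ∀ h : Fin H, ∑ e : S → α, ∏ s, ρ h s (e s) = 1 := by
    intro h
    rw [← prod_sum_swap (fun s a => ρ h s a)]
    exact Finset.prod_eq_one fun s _ => (hρ h s).2
  have key := prod_sum_swap (κ := fun _ : Fin H => S → α) (fun h e => ∏ s, ρ h s (e s))
  simp only [coef]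
  rw [← key]
  exact Finset.prod_eq_one fun h _ => h2 h

/-- update a decision function at a single (step, state) pair -/
def upd2 {H : ℕ} {S α : Type} [DecidableEq S] (d : Fin H → S → α) (h : Fin H) (s : S) (β : α) :
    Fin H → S → α :=
  Function.update d h (Function.update (d h) s β)

lemma upd2_same {H : ℕ} {S α : Type} [DecidableEq S] (d : Fin H → S → α) (h : Fin H) (s : S) (β : α) :
    upd2 d h s β h s = β := by
  simp [upd2]

lemma upd2_ne_step {H : ℕ} {S α : Type} [DecidableEq S] (d : Fin H → S → α) (h h' : Fin H)
    (s : S) (β : α) (hne : h' ≠ h) : upd2 d h s β h' = d h' := by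
  simp [upd2, Function.update_of_ne hne]

lemma upd2_ne_state {H : ℕ} {S α : Type} [DecidableEq S] (d : Fin H → S → α) (h : Fin H)
    (s s' : S) (β : α) (hne : s' ≠ s) : upd2 d h s β h s' = d h s' := by
  simp [upd2, Function.update_of_ne hne]

lemma upd2_invol {H : ℕ} {S α : Type} [DecidableEq S] (d : Fin H → S → α) (h : Fin H) (s : S) (β : α) :
    upd2 (upd2 d h s β) h s (d h s) = d := by
  unfold upd2
  rw [Function.update_self, Function.update_idem, Function.update_idem,
    Function.update_eq_self, Function.update_eq_self]

/-- the part of `coef` not involving block `(h, s)` -/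
def coefAt {H : ℕ} {S α : Type} [Fintype S] [DecidableEq S] (ρ : Fin H → S → α → ℝ)
    (h : Fin H) (s : S) (d : Fin H → S → α) : ℝ :=
  (∏ s' ∈ {s}ᶜ, ρ h s' (d h s')) * ∏ h' ∈ {h}ᶜ, ∏ s', ρ h' s' (d h' s')

lemma coef_factor {H : ℕ} {S α : Type} [Fintype S] [DecidableEq S] (ρ : Fin H → S → α → ℝ)
    (h : Fin H) (s : S) (d : Fin H → S → α) :
    coef ρ d = ρ h s (d h s) * coefAt ρ h s d := by
  unfold coef coefAt
  rw [Fintype.prod_eq_mul_prod_compl h (fun h' => ∏ s', ρ h' s' (d h' s')),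
    Fintype.prod_eq_mul_prod_compl s (fun s' => ρ h s' (d h s'))]
  ring

lemma coefAt_upd2 {H : ℕ} {S α : Type} [Fintype S] [DecidableEq S] (ρ : Fin H → S → α → ℝ)
    (h : Fin H) (s : S) (d : Fin H → S → α) (β : α) :
    coefAt ρ h s (upd2 d h s β) = coefAt ρ h s d := by
  unfold coefAt
  congr 1
  · refine Finset.prod_congr rfl fun s' hs' => ?_
    rw [upd2_ne_state d h s s' β (by simpa using hs')]
  · refine Finset.prod_congr rfl fun h' hh' => ?_
    rw [upd2_ne_step d h h' s β (by simpa using hh')]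

lemma split_sum {H : ℕ} {S α : Type} [Fintype S] [DecidableEq S] [Fintype α] [DecidableEq α]
    {ρ : Fin H → S → α → ℝ} (hρ : IsPolicy ρ) (h : Fin H) (s : S)
    (g : (Fin H → S → α) → α → ℝ) (hg : ∀ d β, g (upd2 d h s β) = g d) :
    ∑ d : Fin H → S → α, coef ρ d * ∑ β, ρ h s β * g d β
      = ∑ d : Fin H → S → α, coef ρ d * g d (d h s) := by
  classical
  have hinv : Function.Involutive
      (fun p : (Fin H → S → α) × α => (upd2 p.1 h s p.2, p.1 h s)) := by
    rintro ⟨d, β⟩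
    simp only [upd2_invol, upd2_same]
  calc ∑ d : Fin H → S → α, coef ρ d * ∑ β, ρ h s β * g d β
      = ∑ p : (Fin H → S → α) × α, coef ρ p.1 * (ρ h s p.2 * g p.1 p.2) := by
        rw [Fintype.sum_prod_type]
        exact Finset.sum_congr rfl fun d _ => by rw [Finset.mul_sum]
    _ = ∑ p : (Fin H → S → α) × α,
          coef ρ (upd2 p.1 h s p.2) * (ρ h s (p.1 h s) * g (upd2 p.1 h s p.2) (p.1 h s)) :=
        (Equiv.sum_comp hinv.toPerm
          (fun p : (Fin H → S → α) × α => coef ρ p.1 * (ρ h s p.2 * g p.1 p.2))).symm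
    _ = ∑ p : (Fin H → S → α) × α,
          (ρ h s p.2 * coefAt ρ h s p.1) * (ρ h s (p.1 h s) * g p.1 (p.1 h s)) := by
        refine Finset.sum_congr rfl fun p _ => ?_
        rw [hg p.1 p.2, coef_factor ρ h s (upd2 p.1 h s p.2), upd2_same, coefAt_upd2]
    _ = ∑ d : Fin H → S → α, ∑ β,
          ρ h s β * (coefAt ρ h s d * (ρ h s (d h s) * g d (d h s))) := by
        rw [Fintype.sum_prod_type]
        exact Finset.sum_congr rfl fun d _ => Finset.sum_congr rfl fun β _ => by ring
    _ = ∑ d : Fin H → S → α, coef ρ d * g d (d h s) := by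
        refine Finset.sum_congr rfl fun d _ => ?_
        rw [← Finset.sum_mul, (hρ h s).2, coef_factor ρ h s d]
        ring

end Expansion

section MainExpansion

set_option linter.unusedSectionVars false
set_option maxHeartbeats 1000000

variable {N M H : ℕ} {S : Type} {A : Fin N → Type} [Fintype S] [∀ j, Fintype (A j)]

lemma expansion (G : MOMG N M H S A) (σ : ∀ j, Fin H → S → A j → ℝ) (k : Fin N)
    [DecidableEq S] [DecidableEq (A k)]
    (ρ : Fin H → S → A k → ℝ) (hρ : IsPolicy ρ) :
    ∀ t, t ≤ H → ∀ s i, Vvec G k (Function.update σ k ρ) t s i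
      = ∑ d : Fin H → S → A k, coef ρ d * Vvec G k (Function.update σ k (detP d)) t s i := by
  classical
  intro t
  induction t with
  | zero =>
    intro _ s i
    simp [Vvec_zero]
  | succ t IH =>
    intro ht1 s i
    have htH : t ≤ H := by omega
    have ht : H - (t+1) < H := by omega
    set h : Fin H := ⟨H - (t+1), ht⟩ with hhdef
    have hhv : (h : ℕ) = H - (t+1) := rfl
    set Q : ((j : Fin N) → A j) → ℝ := fun a => ∏ j ∈ {k}ᶜ, σ j h s (a j) with hQ
    set W : (Fin H → S → A k) → S → ℝ :=
      fun d s' => Vvec G k (Function.update σ k (detP d)) t s' i with hW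
    set Y : (Fin H → S → A k) → ((j : Fin N) → A j) → ℝ :=
      fun d a => Q a * (G.r k h s a i + ∑ s', G.P h s a s' * W d s') with hY
    set g : (Fin H → S → A k) → A k → ℝ := fun d β =>
      ∑ a : (j : Fin N) → A j, (if a k = β then (1:ℝ) else 0) * Y d a with hgdef
    have hg : ∀ d β, g (upd2 d h s β) = g d := by
      intro d β
      have hWeq : ∀ s', W (upd2 d h s β) s' = W d s' := by
        intro s'
        apply Vvec_eq_of_agree
        intro j h' hh'
        rcases eq_or_ne j k with rfl | hjk
        · rw [Function.update_self, Function.update_self]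
          have hne : h' ≠ h := by
            intro hEq
            rw [hEq] at hh'
            simp only [hhv] at hh'
            omega
          funext s'' a
          simp only [detP, upd2_ne_step d h h' s β hne]
        · rw [Function.update_of_ne hjk, Function.update_of_ne hjk]
      simp only [hgdef, hY, hWeq]
    -- LHS
    have hL : Vvec G k (Function.update σ k ρ) (t+1) s i
        = ∑ a : (j : Fin N) → A j, ρ h s (a k) * Q a *
            (G.r k h s a i + ∑ s', G.P h s a s' * ∑ d : Fin H → S → A k, coef ρ d * W d s') := by
      rw [Vvec_succ' G k _ t s i ht h hhv]
      refine Finset.sum_congr rfl fun a _ => ?_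
      rw [prod_update]
      congr 2
      exact Finset.sum_congr rfl fun s' _ => by rw [IH htH s' i]
    -- RHS
    have hRstep : ∀ d : Fin H → S → A k,
        Vvec G k (Function.update σ k (detP d)) (t+1) s i = g d (d h s) := by
      intro d
      rw [Vvec_succ' G k _ t s i ht h hhv]
      simp only [hgdef, hY]
      refine Finset.sum_congr rfl fun a _ => ?_
      rw [prod_update]
      simp only [detP, hW]
      ring
    have hR : ∑ d : Fin H → S → A k, coef ρ d * Vvec G k (Function.update σ k (detP d)) (t+1) s i
        = ∑ d : Fin H → S → A k, coef ρ d * g d (d h s) :=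
      Finset.sum_congr rfl fun d _ => by rw [hRstep d]
    rw [hL, hR, ← split_sum hρ h s g hg]
    -- reduce `g` sums
    have hsum1 : ∀ d : Fin H → S → A k, ∑ β, ρ h s β * g d β
        = ∑ a : (j : Fin N) → A j, ρ h s (a k) * Y d a := by
      intro d
      simp only [hgdef]
      calc ∑ β, ρ h s β * ∑ a : (j : Fin N) → A j, (if a k = β then (1:ℝ) else 0) * Y d a
          = ∑ β, ∑ a : (j : Fin N) → A j, (if a k = β then ρ h s β * Y d a else 0) := by
            refine Finset.sum_congr rfl fun β _ => ?_
            rw [Finset.mul_sum]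
            refine Finset.sum_congr rfl fun a _ => ?_
            split_ifs <;> ring
        _ = ∑ a : (j : Fin N) → A j, ∑ β, (if a k = β then ρ h s β * Y d a else 0) :=
            Finset.sum_comm
        _ = ∑ a : (j : Fin N) → A j, ρ h s (a k) * Y d a := by
            refine Finset.sum_congr rfl fun a _ => ?_
            rw [Finset.sum_ite_eq]
            simp
    simp only [hsum1]
    -- core sum manipulation
    calc ∑ a : (j : Fin N) → A j, ρ h s (a k) * Q a *
            (G.r k h s a i + ∑ s', G.P h s a s' * ∑ d : Fin H → S → A k, coef ρ d * W d s')
        = ∑ a : (j : Fin N) → A j, ∑ d : Fin H → S → A k,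
            coef ρ d * (ρ h s (a k) * Y d a) := by
          refine Finset.sum_congr rfl fun a _ => ?_
          have h1 : ∑ s', G.P h s a s' * ∑ d : Fin H → S → A k, coef ρ d * W d s'
              = ∑ d : Fin H → S → A k, coef ρ d * ∑ s', G.P h s a s' * W d s' := by
            calc ∑ s', G.P h s a s' * ∑ d : Fin H → S → A k, coef ρ d * W d s'
                = ∑ s', ∑ d : Fin H → S → A k, coef ρ d * (G.P h s a s' * W d s') := by
                  refine Finset.sum_congr rfl fun s' _ => ?_
                  rw [Finset.mul_sum]
                  exact Finset.sum_congr rfl fun d _ => by ring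
              _ = ∑ d : Fin H → S → A k, ∑ s', coef ρ d * (G.P h s a s' * W d s') :=
                  Finset.sum_comm
              _ = ∑ d : Fin H → S → A k, coef ρ d * ∑ s', G.P h s a s' * W d s' :=
                  Finset.sum_congr rfl fun d _ => (Finset.mul_sum _ _ _).symm
          have h2 : G.r k h s a i + ∑ d : Fin H → S → A k, coef ρ d * ∑ s', G.P h s a s' * W d s'
              = ∑ d : Fin H → S → A k, coef ρ d * (G.r k h s a i + ∑ s', G.P h s a s' * W d s') := by
            calc G.r k h s a i + ∑ d : Fin H → S → A k, coef ρ d * ∑ s', G.P h s a s' * W d s'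
                = (∑ d : Fin H → S → A k, coef ρ d) * G.r k h s a i
                    + ∑ d : Fin H → S → A k, coef ρ d * ∑ s', G.P h s a s' * W d s' := by
                  rw [sum_coef hρ, one_mul]
              _ = ∑ d : Fin H → S → A k, (coef ρ d * G.r k h s a i
                    + coef ρ d * ∑ s', G.P h s a s' * W d s') := by
                  rw [Finset.sum_add_distrib, Finset.sum_mul]
              _ = ∑ d : Fin H → S → A k, coef ρ d * (G.r k h s a i + ∑ s', G.P h s a s' * W d s') :=
                  Finset.sum_congr rfl fun d _ => by ring
          rw [h1, h2, Finset.mul_sum]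
          refine Finset.sum_congr rfl fun d _ => ?_
          simp only [hY]
          ring
      _ = ∑ d : Fin H → S → A k, ∑ a : (j : Fin N) → A j,
            coef ρ d * (ρ h s (a k) * Y d a) := Finset.sum_comm
      _ = ∑ d : Fin H → S → A k, coef ρ d * ∑ a : (j : Fin N) → A j, ρ h s (a k) * Y d a :=
          Finset.sum_congr rfl fun d _ => (Finset.mul_sum _ _ _).symm

end MainExpansion

section Occupancy

set_option linter.unusedSectionVars false
set_option maxHeartbeats 1000000

variable {N M H : ℕ} {S : Type} {A : Fin N → Type} [Fintype S] [∀ j, Fintype (A j)]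

/-- state distribution at step `u` (forward recursion) -/
noncomputable def nu [DecidableEq S] (G : MOMG N M H S A) (π : ∀ j, Fin H → S → A j → ℝ)
    (s1 : S) : ℕ → S → ℝ
  | 0 => fun s => if s = s1 then 1 else 0
  | (u+1) => fun s' => if hu : u < H then
      ∑ s, nu G π s1 u s * ∑ a : (j : Fin N) → A j,
        (∏ j, π j ⟨u, hu⟩ s (a j)) * G.P ⟨u, hu⟩ s a s'
    else 0

lemma nu_zero [DecidableEq S] (G : MOMG N M H S A) (π : ∀ j, Fin H → S → A j → ℝ)
    (s1 s : S) : nu G π s1 0 s = if s = s1 then 1 else 0 := by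
  rw [nu]

lemma nu_succ [DecidableEq S] (G : MOMG N M H S A) (π : ∀ j, Fin H → S → A j → ℝ)
    (s1 : S) (u : ℕ) (hu : u < H) (s' : S) :
    nu G π s1 (u+1) s' = ∑ s, nu G π s1 u s * ∑ a : (j : Fin N) → A j,
      (∏ j, π j ⟨u, hu⟩ s (a j)) * G.P ⟨u, hu⟩ s a s' := by
  rw [nu]
  dsimp only
  rw [dif_pos hu]

lemma nu_succ_ge [DecidableEq S] (G : MOMG N M H S A) (π : ∀ j, Fin H → S → A j → ℝ)
    (s1 : S) (u : ℕ) (hu : ¬ u < H) (s' : S) : nu G π s1 (u+1) s' = 0 := by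
  rw [nu]
  dsimp only
  rw [dif_neg hu]

lemma nu_nonneg [DecidableEq S] (G : MOMG N M H S A) (π : ∀ j, Fin H → S → A j → ℝ)
    (s1 : S) (hπ : ∀ j, IsPolicy (π j)) : ∀ u s, 0 ≤ nu G π s1 u s := by
  intro u
  induction u with
  | zero => intro s; rw [nu_zero]; split <;> norm_num
  | succ u IH =>
    intro s'
    by_cases hu : u < H
    · rw [nu_succ G π s1 u hu s']
      refine Finset.sum_nonneg fun s _ => mul_nonneg (IH s) ?_
      refine Finset.sum_nonneg fun a _ => mul_nonneg ?_ (G.P_nonneg _ _ _ _)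
      exact Finset.prod_nonneg fun j _ => (hπ j _ _).1 _
    · rw [nu_succ_ge G π s1 u hu s']

/-- expected reward collected at step `u` -/
noncomputable def Rterm [DecidableEq S] (G : MOMG N M H S A) (k : Fin N)
    (π : ∀ j, Fin H → S → A j → ℝ) (s1 : S) (i : Fin M) (u : ℕ) : ℝ :=
  if hu : u < H then
    ∑ s, nu G π s1 u s * ∑ a : (j : Fin N) → A j,
      (∏ j, π j ⟨u, hu⟩ s (a j)) * G.r k ⟨u, hu⟩ s a i
  else 0

lemma forward_backward [DecidableEq S] (G : MOMG N M H S A) (k : Fin N)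
    (π : ∀ j, Fin H → S → A j → ℝ) (s1 : S) (i : Fin M) :
    ∀ u, u ≤ H → Vvec G k π H s1 i
      = (∑ u' ∈ Finset.range u, Rterm G k π s1 i u')
        + ∑ s, nu G π s1 u s * Vvec G k π (H - u) s i := by
  intro u
  induction u with
  | zero =>
    intro _
    have hdiag : ∑ s, nu G π s1 0 s * Vvec G k π (H - 0) s i = Vvec G k π H s1 i := by
      rw [Finset.sum_eq_single s1]
      · rw [nu_zero]; simp
      · intro b _ hb; rw [nu_zero]; simp [hb]
      · intro habs; exact absurd (Finset.mem_univ s1) habs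
    rw [Finset.sum_range_zero, hdiag, zero_add]
  | succ u IH =>
    intro hu1
    have hu : u < H := by omega
    have step : ∑ s, nu G π s1 u s * Vvec G k π (H - u) s i
        = Rterm G k π s1 i u
          + ∑ s', nu G π s1 (u+1) s' * Vvec G k π (H - (u+1)) s' i := by
      set t := H - (u+1) with htdef
      have htu : H - u = t + 1 := by omega
      have ht : H - (t+1) < H := by omega
      have hVs : ∀ s, Vvec G k π (t+1) s i
          = ∑ a : (j : Fin N) → A j, (∏ j, π j ⟨u, hu⟩ s (a j)) *
              (G.r k ⟨u, hu⟩ s a i + ∑ s', G.P ⟨u, hu⟩ s a s' * Vvec G k π t s' i) :=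
        fun s => Vvec_succ' G k π t s i ht ⟨u, hu⟩ (by simp only []; omega)
      rw [htu]
      calc ∑ s, nu G π s1 u s * Vvec G k π (t+1) s i
          = ∑ s, (nu G π s1 u s * ∑ a : (j : Fin N) → A j,
                (∏ j, π j ⟨u, hu⟩ s (a j)) * G.r k ⟨u, hu⟩ s a i
              + nu G π s1 u s * ∑ a : (j : Fin N) → A j,
                (∏ j, π j ⟨u, hu⟩ s (a j)) * ∑ s', G.P ⟨u, hu⟩ s a s' * Vvec G k π t s' i) := by
            refine Finset.sum_congr rfl fun s _ => ?_
            rw [hVs s, ← mul_add, ← Finset.sum_add_distrib]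
            congr 1
            refine Finset.sum_congr rfl fun a _ => ?_
            ring
        _ = Rterm G k π s1 i u
            + ∑ s, nu G π s1 u s * ∑ a : (j : Fin N) → A j,
                (∏ j, π j ⟨u, hu⟩ s (a j)) * ∑ s', G.P ⟨u, hu⟩ s a s' * Vvec G k π t s' i := by
            rw [Finset.sum_add_distrib]
            congr 1
            rw [Rterm, dif_pos hu]
        _ = Rterm G k π s1 i u
            + ∑ s', nu G π s1 (u+1) s' * Vvec G k π t s' i := by
            congr 1
            calc ∑ s, nu G π s1 u s * ∑ a : (j : Fin N) → A j,
                  (∏ j, π j ⟨u, hu⟩ s (a j)) * ∑ s', G.P ⟨u, hu⟩ s a s' * Vvec G k π t s' i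
                = ∑ s, ∑ a : (j : Fin N) → A j, ∑ s',
                    nu G π s1 u s * ((∏ j, π j ⟨u, hu⟩ s (a j)) *
                      (G.P ⟨u, hu⟩ s a s' * Vvec G k π t s' i)) := by
                  simp only [Finset.mul_sum]
              _ = ∑ s, ∑ s', ∑ a : (j : Fin N) → A j,
                    nu G π s1 u s * ((∏ j, π j ⟨u, hu⟩ s (a j)) *
                      (G.P ⟨u, hu⟩ s a s' * Vvec G k π t s' i)) := by
                  refine Finset.sum_congr rfl fun s _ => Finset.sum_comm
              _ = ∑ s', ∑ s, ∑ a : (j : Fin N) → A j,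
                    nu G π s1 u s * ((∏ j, π j ⟨u, hu⟩ s (a j)) *
                      (G.P ⟨u, hu⟩ s a s' * Vvec G k π t s' i)) := Finset.sum_comm
              _ = ∑ s', nu G π s1 (u+1) s' * Vvec G k π t s' i := by
                  refine Finset.sum_congr rfl fun s' _ => ?_
                  rw [nu_succ G π s1 u hu s', Finset.sum_mul]
                  refine Finset.sum_congr rfl fun s _ => ?_
                  rw [mul_assoc, Finset.sum_mul, Finset.mul_sum]
                  refine Finset.sum_congr rfl fun a _ => ?_
                  ring
    rw [IH (by omega), step, Finset.sum_range_succ]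
    ring

lemma value_eq_sum_R [DecidableEq S] (G : MOMG N M H S A) (k : Fin N)
    (π : ∀ j, Fin H → S → A j → ℝ) (s1 : S) (i : Fin M) :
    Vvec G k π H s1 i = ∑ u ∈ Finset.range H, Rterm G k π s1 i u := by
  have := forward_backward G k π s1 i H (le_refl H)
  rw [Nat.sub_self] at this
  simp only [Vvec_zero, mul_zero, Finset.sum_const_zero, add_zero] at this
  exact this

end Occupancy

section Mixture

set_option linter.unusedSectionVars false
set_option maxHeartbeats 1000000

variable {N M H : ℕ} {S : Type} {A : Fin N → Type} [Fintype S] [∀ j, Fintype (A j)]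

lemma update_isProduct {σ : ∀ j, Fin H → S → A j → ℝ} (hσ : IsProductPolicy σ)
    {k : Fin N} {ρ : Fin H → S → A k → ℝ} (hρ : IsPolicy ρ) :
    IsProductPolicy (Function.update σ k ρ) := by
  intro j
  rcases eq_or_ne j k with rfl | hjk
  · rw [Function.update_self]; exact hρ
  · rw [Function.update_of_ne hjk]; exact hσ j

lemma mix_policies [DecidableEq S] (G : MOMG N M H S A) (s1 : S)
    (σ : ∀ j, Fin H → S → A j → ℝ) (hσ : IsProductPolicy σ) (k : Fin N)
    (ρ1 ρ2 : Fin H → S → A k → ℝ) (h1 : IsPolicy ρ1) (h2 : IsPolicy ρ2)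
    (α : ℝ) (hα : 0 ≤ α) (hα1 : α ≤ 1) :
    ∃ ρm : Fin H → S → A k → ℝ, IsPolicy ρm ∧ ∀ i,
      ValueVec G k (Function.update σ k ρm) s1 i
        = α * ValueVec G k (Function.update σ k ρ1) s1 i
          + (1-α) * ValueVec G k (Function.update σ k ρ2) s1 i := by
  classical
  set ν1 : ℕ → S → ℝ := nu G (Function.update σ k ρ1) s1 with hν1def
  set ν2 : ℕ → S → ℝ := nu G (Function.update σ k ρ2) s1 with hν2def
  set D : ℕ → S → ℝ := fun u s => α * ν1 u s + (1-α) * ν2 u s with hDdef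
  set ρm : Fin H → S → A k → ℝ := fun h s a =>
    if D (h : ℕ) s = 0 then ρ1 h s a
    else (α * ν1 (h : ℕ) s * ρ1 h s a + (1-α) * ν2 (h : ℕ) s * ρ2 h s a) / D (h : ℕ) s
    with hρmdef
  have hν1nn : ∀ u s, 0 ≤ ν1 u s := nu_nonneg G _ s1 (update_isProduct hσ h1)
  have hν2nn : ∀ u s, 0 ≤ ν2 u s := nu_nonneg G _ s1 (update_isProduct hσ h2)
  have hDnn : ∀ u s, 0 ≤ D u s := fun u s =>
    add_nonneg (mul_nonneg hα (hν1nn u s)) (mul_nonneg (by linarith) (hν2nn u s))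
  have hρm : IsPolicy ρm := by
    intro h s
    constructor
    · intro a
      simp only [hρmdef]
      split
      · exact (h1 h s).1 a
      · refine div_nonneg ?_ (hDnn _ s)
        have a1 := (h1 h s).1 a
        have a2 := (h2 h s).1 a
        have b1 := hν1nn (h : ℕ) s
        have b2 := hν2nn (h : ℕ) s
        have hα2 : (0:ℝ) ≤ 1 - α := by linarith
        nlinarith [mul_nonneg (mul_nonneg hα b1) a1, mul_nonneg (mul_nonneg hα2 b2) a2]
    · by_cases hD : D (h : ℕ) s = 0
      · simp only [hρmdef, hD, if_true]
        exact (h1 h s).2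
      · simp only [hρmdef, hD, if_false]
        rw [← Finset.sum_div]
        rw [Finset.sum_add_distrib, ← Finset.mul_sum, ← Finset.mul_sum,
          (h1 h s).2, (h2 h s).2, mul_one, mul_one]
        exact div_self hD
  have hpoint : ∀ (h : Fin H) (s : S) (a : A k),
      D (h : ℕ) s * ρm h s a
        = α * ν1 (h : ℕ) s * ρ1 h s a + (1-α) * ν2 (h : ℕ) s * ρ2 h s a := by
    intro h s a
    by_cases hD : D (h : ℕ) s = 0
    · have e1 : α * ν1 (h : ℕ) s = 0 := by
        have := mul_nonneg hα (hν1nn (h : ℕ) s)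
        have := mul_nonneg (show (0:ℝ) ≤ 1 - α by linarith) (hν2nn (h : ℕ) s)
        have hDe : α * ν1 (h : ℕ) s + (1-α) * ν2 (h : ℕ) s = 0 := hD
        linarith
      have e2 : (1-α) * ν2 (h : ℕ) s = 0 := by
        have := mul_nonneg hα (hν1nn (h : ℕ) s)
        have := mul_nonneg (show (0:ℝ) ≤ 1 - α by linarith) (hν2nn (h : ℕ) s)
        have hDe : α * ν1 (h : ℕ) s + (1-α) * ν2 (h : ℕ) s = 0 := hD
        linarith
      rw [hD, zero_mul, e1, e2, zero_mul, zero_mul, add_zero]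
    · simp only [hρmdef, hD, if_false]
      rw [mul_comm, div_mul_cancel₀ _ hD]
  -- the main one-step mixing identity
  have hmain : ∀ (u : ℕ) (hu : u < H) (F : S → ((j : Fin N) → A j) → ℝ),
      (∀ s, nu G (Function.update σ k ρm) s1 u s = D u s) →
      ∑ s, nu G (Function.update σ k ρm) s1 u s *
          ∑ a : (j : Fin N) → A j, (∏ j, Function.update σ k ρm j ⟨u, hu⟩ s (a j)) * F s a
        = α * ∑ s, ν1 u s *
            ∑ a : (j : Fin N) → A j, (∏ j, Function.update σ k ρ1 j ⟨u, hu⟩ s (a j)) * F s a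
          + (1-α) * ∑ s, ν2 u s *
            ∑ a : (j : Fin N) → A j, (∏ j, Function.update σ k ρ2 j ⟨u, hu⟩ s (a j)) * F s a := by
    intro u hu F hνu
    have key : ∀ s, nu G (Function.update σ k ρm) s1 u s *
          ∑ a : (j : Fin N) → A j, (∏ j, Function.update σ k ρm j ⟨u, hu⟩ s (a j)) * F s a
        = α * (ν1 u s * ∑ a : (j : Fin N) → A j,
              (∏ j, Function.update σ k ρ1 j ⟨u, hu⟩ s (a j)) * F s a)
          + (1-α) * (ν2 u s * ∑ a : (j : Fin N) → A j,
              (∏ j, Function.update σ k ρ2 j ⟨u, hu⟩ s (a j)) * F s a) := by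
      intro s
      rw [hνu s]
      simp only [Finset.mul_sum]
      rw [← Finset.sum_add_distrib]
      refine Finset.sum_congr rfl fun a _ => ?_
      rw [prod_update σ k ρm, prod_update σ k ρ1, prod_update σ k ρ2]
      have hp := hpoint ⟨u, hu⟩ s (a k)
      have hval : ((⟨u, hu⟩ : Fin H) : ℕ) = u := rfl
      rw [hval] at hp
      linear_combination ((∏ j ∈ {k}ᶜ, σ j ⟨u, hu⟩ s (a j)) * F s a) * hp
    rw [Finset.sum_congr rfl fun s _ => key s]
    rw [Finset.sum_add_distrib, ← Finset.mul_sum, ← Finset.mul_sum]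
  -- the state distribution mixes
  have hνm : ∀ u s, nu G (Function.update σ k ρm) s1 u s = D u s := by
    intro u
    induction u with
    | zero =>
      intro s
      simp only [hDdef, hν1def, hν2def, nu_zero]
      split <;> ring
    | succ u IH =>
      intro s'
      by_cases hu : u < H
      · rw [nu_succ G _ s1 u hu s']
        rw [hmain u hu (fun s a => G.P ⟨u, hu⟩ s a s') IH]
        simp only [hDdef, hν1def, hν2def]
        rw [nu_succ G _ s1 u hu s', nu_succ G _ s1 u hu s']
      · rw [nu_succ_ge G _ s1 u hu s']
        simp only [hDdef, hν1def, hν2def]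
        rw [nu_succ_ge G _ s1 u hu s', nu_succ_ge G _ s1 u hu s']
        ring
  refine ⟨ρm, hρm, ?_⟩
  intro i
  simp only [ValueVec]
  rw [value_eq_sum_R G k _ s1 i, value_eq_sum_R G k _ s1 i, value_eq_sum_R G k _ s1 i]
  rw [Finset.mul_sum, Finset.mul_sum, ← Finset.sum_add_distrib]
  refine Finset.sum_congr rfl fun u hu' => ?_
  have hu : u < H := Finset.mem_range.mp hu'
  rw [Rterm, dif_pos hu, Rterm, dif_pos hu, Rterm, dif_pos hu]
  exact hmain u hu (fun s a => G.r k ⟨u, hu⟩ s a i) (fun s => hνm u s)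

end Mixture

section ConvMix

set_option linter.unusedSectionVars false
set_option maxHeartbeats 1000000

variable {N M H : ℕ} {S : Type} {A : Fin N → Type} [Fintype S] [∀ j, Fintype (A j)]

lemma conv_mix [DecidableEq S] (G : MOMG N M H S A) (s1 : S)
    (σ : ∀ j, Fin H → S → A j → ℝ) (hσ : IsProductPolicy σ) (k : Fin N)
    [DecidableEq (A k)] :
    ∀ (F : Finset (Fin H → S → A k)) (c : (Fin H → S → A k) → ℝ),
      (∀ d, 0 ≤ c d) → ∑ d ∈ F, c d = 1 →
      ∃ ρ, IsPolicy ρ ∧ ∀ i, ValueVec G k (Function.update σ k ρ) s1 i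
        = ∑ d ∈ F, c d * ValueVec G k (Function.update σ k (detP d)) s1 i := by
  classical
  intro F
  induction F using Finset.induction_on with
  | empty =>
    intro c hc hsum
    simp at hsum
  | @insert d0 F hd0 IH =>
    intro c hc hsum
    rw [Finset.sum_insert hd0] at hsum
    by_cases hT : ∑ d ∈ F, c d = 0
    · have hc0 : c d0 = 1 := by linarith
      have hzero : ∀ d ∈ F, c d = 0 := by
        intro d hd
        exact (Finset.sum_eq_zero_iff_of_nonneg (fun d _ => hc d)).mp hT d hd
      refine ⟨detP d0, detP_isPolicy d0, ?_⟩
      intro i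
      rw [Finset.sum_insert hd0, hc0, one_mul,
        Finset.sum_eq_zero fun d hd => by rw [hzero d hd, zero_mul], add_zero]
    · have hTnn : 0 ≤ ∑ d ∈ F, c d := Finset.sum_nonneg fun d _ => hc d
      have hTpos : 0 < ∑ d ∈ F, c d := lt_of_le_of_ne hTnn (Ne.symm hT)
      obtain ⟨ρ', hρ', hval'⟩ := IH (fun d => c d / ∑ d ∈ F, c d)
        (fun d => div_nonneg (hc d) hTnn)
        (by rw [← Finset.sum_div]; exact div_self hT)
      obtain ⟨ρm, hρm, hvm⟩ := mix_policies G s1 σ hσ k (detP d0) ρ'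
        (detP_isPolicy d0) hρ' (c d0) (hc d0) (by linarith)
      refine ⟨ρm, hρm, ?_⟩
      intro i
      rw [hvm i, hval' i, Finset.sum_insert hd0]
      have h1α : 1 - c d0 = ∑ d ∈ F, c d := by linarith
      rw [h1α, Finset.mul_sum]
      congr 1
      refine Finset.sum_congr rfl fun d hd => ?_
      rw [← mul_assoc, mul_comm (∑ d ∈ F, c d) (c d / ∑ d ∈ F, c d),
        div_mul_cancel₀ _ hT]

end ConvMix


set_option maxHeartbeats 1000000 in
/-- **Every PNE is a Nash equilibrium of some strictly positive scalarization.**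
For any Pareto-Nash Equilibrium `π*` of a finite MOMG, there exists a preference
profile `Λ = (λ^1,…,λ^N)` with every `λ^k ∈ Δ_M^o` (strictly positive entries
summing to 1) such that `π*` is a Nash equilibrium of the scalarized game `G_Λ`. -/
theorem PNE_is_scalarizedNE {N M H : ℕ} (hN : 1 ≤ N) (hH : 1 ≤ H) (hM : 1 ≤ M)
    (S : Type) (A : Fin N → Type) [Fintype S] [Nonempty S]
    [∀ j, Fintype (A j)] [∀ j, Nonempty (A j)]
    (G : MOMG N M H S A) (s1 : S)
    (πstar : (j : Fin N) → Fin H → S → A j → ℝ)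
    (hprod : IsProductPolicy πstar)
    (hPNE : IsPNE G s1 πstar) :
    ∃ lam : Fin N → Fin M → ℝ,
      (∀ k, InOpenSimplex (lam k)) ∧ IsScalarizedNE G s1 lam πstar := by
  classical
  have key : ∀ k : Fin N, ∃ lamk : Fin M → ℝ, InOpenSimplex lamk ∧
      ∀ ρ : Fin H → S → A k → ℝ, IsPolicy ρ →
        ∑ i, lamk i * ValueVec G k (Function.update πstar k ρ) s1 i ≤
          ∑ i, lamk i * ValueVec G k πstar s1 i := by
    intro k
    set W : (Fin H → S → A k) → Fin M → ℝ :=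
      fun d => ValueVec G k (Function.update πstar k (detP d)) s1 with hW
    set Vst : Fin M → ℝ := ValueVec G k πstar s1 with hVst
    set e := Fintype.equivFin (Fin H → S → A k) with he
    set n := Fintype.card (Fin H → S → A k) with hn
    set v : Fin n → Fin M → ℝ := fun i m => W (e.symm i) m - Vst m with hv
    have hyp : ∀ μ : Fin n → ℝ, (∀ i, 0 ≤ μ i) → (∀ m, 0 ≤ ∑ i, μ i * v i m) →
        ∀ m, ∑ i, μ i * v i m = 0 := by
      intro μ hμ hnn m
      by_contra hne
      set T := ∑ i, μ i with hT
      have hTnn : 0 ≤ T := Finset.sum_nonneg fun i _ => hμ i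
      have hTpos : 0 < T := by
        rcases eq_or_lt_of_le hTnn with h0 | h
        · exfalso
          apply hne
          have hall : ∀ i ∈ Finset.univ, μ i = 0 :=
            (Finset.sum_eq_zero_iff_of_nonneg (fun i _ => hμ i)).mp h0.symm
          exact Finset.sum_eq_zero fun i hi => by rw [hall i hi, zero_mul]
        · exact h
      set c : (Fin H → S → A k) → ℝ := fun d => μ (e d) / T with hc
      have hcnn : ∀ d, 0 ≤ c d := fun d => div_nonneg (hμ _) hTnn
      have hesum : ∀ f : Fin n → ℝ, ∑ d : Fin H → S → A k, f (e d) = ∑ i, f i :=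
        fun f => Equiv.sum_comp e f
      have hcsum : ∑ d : Fin H → S → A k, c d = 1 := by
        simp only [hc]
        rw [← Finset.sum_div, hesum μ]
        exact div_self (ne_of_gt hTpos)
      obtain ⟨ρ, hρ, hval⟩ := conv_mix G s1 πstar hprod k Finset.univ c hcnn hcsum
      apply hPNE k ρ hρ
      have hvalm : ∀ m', ValueVec G k (Function.update πstar k ρ) s1 m'
          = Vst m' + (∑ i, μ i * v i m') / T := by
        intro m'
        rw [hval m']
        calc ∑ d : Fin H → S → A k, c d * W d m'
            = ∑ d : Fin H → S → A k, (c d * Vst m' + μ (e d) * v (e d) m' / T) := by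
              refine Finset.sum_congr rfl fun d _ => ?_
              have hvd : v (e d) m' = W d m' - Vst m' := by
                simp only [hv, Equiv.symm_apply_apply]
              rw [hvd]
              simp only [hc]
              field_simp
              ring
          _ = (∑ d : Fin H → S → A k, c d) * Vst m'
              + (∑ d : Fin H → S → A k, μ (e d) * v (e d) m') / T := by
              rw [Finset.sum_add_distrib, Finset.sum_mul, Finset.sum_div]
          _ = Vst m' + (∑ i, μ i * v i m') / T := by
              rw [hcsum, one_mul, hesum (fun i => μ i * v i m')]
      constructor
      · intro m'
        rw [hvalm m']
        have := div_nonneg (hnn m') hTnn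
        simp only [hVst] at *
        linarith
      · refine ⟨m, ?_⟩
        rw [hvalm m]
        have hpos : 0 < (∑ i, μ i * v i m) / T :=
          div_pos (lt_of_le_of_ne (hnn m) (Ne.symm hne)) hTpos
        simp only [hVst] at *
        linarith
    obtain ⟨l, hlpos, hlv⟩ := tucker v hyp
    have hSpos : 0 < ∑ m, l m :=
      Finset.sum_pos (fun m _ => hlpos m) ⟨⟨0, hM⟩, Finset.mem_univ _⟩
    refine ⟨fun m => l m / ∑ m', l m', ⟨fun m => div_pos (hlpos m) hSpos,
      by rw [← Finset.sum_div]; exact div_self (ne_of_gt hSpos)⟩, ?_⟩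
    intro ρ hρ
    have hexp : ∀ m, ValueVec G k (Function.update πstar k ρ) s1 m
        = ∑ d : Fin H → S → A k, coef ρ d * W d m := by
      intro m
      exact expansion G πstar k ρ hρ H (le_refl H) s1 m
    have hkey : ∀ d : Fin H → S → A k, ∑ m, l m * (W d m - Vst m) ≤ 0 := by
      intro d
      have := hlv (e d)
      simp only [hv, Equiv.symm_apply_apply] at this
      exact this
    have main : ∑ m, l m * ValueVec G k (Function.update πstar k ρ) s1 m
        ≤ ∑ m, l m * Vst m := by
      have h1 : ∑ m, l m * ValueVec G k (Function.update πstar k ρ) s1 m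
          = ∑ m, l m * Vst m
            + ∑ d : Fin H → S → A k, coef ρ d * ∑ m, l m * (W d m - Vst m) := by
        calc ∑ m, l m * ValueVec G k (Function.update πstar k ρ) s1 m
            = ∑ m, ∑ d : Fin H → S → A k, coef ρ d * (l m * W d m) := by
              refine Finset.sum_congr rfl fun m _ => ?_
              rw [hexp m, Finset.mul_sum]
              exact Finset.sum_congr rfl fun d _ => by ring
          _ = ∑ d : Fin H → S → A k, ∑ m, coef ρ d * (l m * W d m) := Finset.sum_comm
          _ = ∑ d : Fin H → S → A k, coef ρ d * ∑ m, l m * W d m :=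
              Finset.sum_congr rfl fun d _ => (Finset.mul_sum _ _ _).symm
          _ = ∑ d : Fin H → S → A k, (coef ρ d * ∑ m, l m * Vst m
                + coef ρ d * ∑ m, l m * (W d m - Vst m)) := by
              refine Finset.sum_congr rfl fun d _ => ?_
              rw [← mul_add, ← Finset.sum_add_distrib]
              congr 1
              exact Finset.sum_congr rfl fun m _ => by ring
          _ = (∑ d : Fin H → S → A k, coef ρ d) * ∑ m, l m * Vst m
              + ∑ d : Fin H → S → A k, coef ρ d * ∑ m, l m * (W d m - Vst m) := by
              rw [Finset.sum_add_distrib, Finset.sum_mul]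
          _ = ∑ m, l m * Vst m
              + ∑ d : Fin H → S → A k, coef ρ d * ∑ m, l m * (W d m - Vst m) := by
              rw [sum_coef hρ, one_mul]
      rw [h1]
      have h2 : ∑ d : Fin H → S → A k, coef ρ d * ∑ m, l m * (W d m - Vst m) ≤ 0 :=
        Finset.sum_nonpos fun d _ =>
          mul_nonpos_of_nonneg_of_nonpos (coef_nonneg hρ d) (hkey d)
      linarith
    have hdiv : ∀ (x : Fin M → ℝ), ∑ m, l m / (∑ m', l m') * x m
        = (∑ m, l m * x m) / ∑ m', l m' := by
      intro x
      rw [Finset.sum_div]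
      exact Finset.sum_congr rfl fun m _ => by ring
    rw [hdiv, hdiv]
    exact (div_le_div_iff_of_pos_right hSpos).mpr main
  choose lam hlam1 hlam2 using key
  exact ⟨lam, hlam1, fun k ρ hρ => hlam2 k ρ hρ⟩
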